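/- Let (E,‖·‖_E) be a pseudo-normed real vector space, q ∈ [1,∞) and r < r' real numbers. Then there exists a constant K > 0 (one may take K = 1/(1 − 2^{−q(r'−r)})) such that for all f ∈ Σ^r_q(E): ∑_{n∈ℕ} 2^{−qn(r'−r)} ‖S_n f‖_{Σ^{r'}_q}^q ≤ K ‖f‖_{Σ^r_q}^q. -/

import Mathlib

open Filter
open scoped ENNReal NNReal

/-- A pseudo-norm on a real vector space: nonnegative, symmetric, subadditive,
and vanishing exactly at `0`. -/
structure IsPseudoNorm {E : Type*} [AddCommGroup E] [Module ℝ E] (N : E → ℝ) : Prop where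
  nonneg : ∀ x, 0 ≤ N x
  neg : ∀ x, N (-x) = N x
  add_le : ∀ x y, N (x + y) ≤ N x + N y
  eq_zero_iff : ∀ x, N x = 0 ↔ x = 0

/-- The `Σ^s_q(E)` pseudo-norm of a sequence `f : ℕ → E`:
`(∑_k 2^{qks} ‖f_k‖_E^q)^{1/q}` for `q < ∞` and `sup_k 2^{ks} ‖f_k‖_E` for `q = ∞`. -/
noncomputable def sigmaNorm {E : Type*} (N : E → ℝ) (s : ℝ) (q : ℝ≥0∞) (f : ℕ → E) : ℝ≥0∞ :=
  if q = ⊤ then ⨆ k : ℕ, ENNReal.ofReal ((2 : ℝ) ^ ((k : ℝ) * s) * N (f k))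
  else (∑' k : ℕ, ENNReal.ofReal ((2 : ℝ) ^ ((k : ℝ) * s) * N (f k)) ^ q.toReal) ^ (1 / q.toReal)

/-- Membership in `Σ^s_q(E)`: finiteness of the norm when `q < ∞`, and
`2^{ks}‖f_k‖_E → 0` when `q = ∞`. -/
def memSigma {E : Type*} (N : E → ℝ) (s : ℝ) (q : ℝ≥0∞) (f : ℕ → E) : Prop :=
  if q = ⊤ then Tendsto (fun k : ℕ => (2 : ℝ) ^ ((k : ℝ) * s) * N (f k)) atTop (nhds 0)
  else sigmaNorm N s q f < ⊤

/-- Friedrichs smoothing operator `S_n`: truncation of a sequence after index `n`. -/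
def smoothS {E : Type*} [Zero E] (n : ℕ) (f : ℕ → E) : ℕ → E :=
  fun k => if k ≤ n then f k else 0

set_option maxHeartbeats 1600000 in
lemma tail_geom (ρ : ℝ≥0∞) (k : ℕ) :
    ∑' n : ℕ, (if k ≤ n then ρ ^ n else 0) = ρ ^ k * (1 - ρ)⁻¹ := by
  rw [← Summable.sum_add_tsum_nat_add' (f := fun n : ℕ => if k ≤ n then ρ ^ n else 0) (k := k)
    ENNReal.summable]
  have h1 : ∑ i ∈ Finset.range k, (if k ≤ i then ρ ^ i else 0) = 0 := by
    apply Finset.sum_eq_zero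
    intro i hi
    simp [Nat.not_le.mpr (Finset.mem_range.mp hi)]
  rw [h1, zero_add]
  have h2 : ∀ i : ℕ, (if k ≤ i + k then ρ ^ (i + k) else 0) = ρ ^ k * ρ ^ i := by
    intro i
    rw [if_pos (Nat.le_add_left k i), pow_add, mul_comm]
  simp_rw [h2]
  rw [ENNReal.tsum_mul_left, ENNReal.tsum_geometric]

/-- Estimate (3.2): for `q ∈ [1,∞)` and `r < r'`, with `K = 1/(1 - 2^{-q(r'-r)})`,
one has `∑_n 2^{-qn(r'-r)} ‖S_n f‖_{Σ^{r'}_q}^q ≤ K ‖f‖_{Σ^r_q}^q` for all `f ∈ Σ^r_q(E)`. -/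
theorem sum_smoothS_sigmaNorm_pow_le {E : Type*} [AddCommGroup E] [Module ℝ E]
    (N : E → ℝ) (hN : IsPseudoNorm N) (q : ℝ) (hq : 1 ≤ q) (r r' : ℝ) (hrr' : r < r')
    (K : ℝ) (hK : K = 1 / (1 - (2 : ℝ) ^ (-(q * (r' - r))))) :
    0 < K ∧
    ∀ f : ℕ → E, memSigma N r (ENNReal.ofReal q) f →
      ∑' n : ℕ, ENNReal.ofReal ((2 : ℝ) ^ (-(q * (n : ℝ) * (r' - r)))) *
          sigmaNorm N r' (ENNReal.ofReal q) (smoothS n f) ^ q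
        ≤ ENNReal.ofReal K * sigmaNorm N r (ENNReal.ofReal q) f ^ q := by
  have hq0 : (0 : ℝ) < q := lt_of_lt_of_le one_pos hq
  have hdelta : (0 : ℝ) < q * (r' - r) := mul_pos hq0 (sub_pos.mpr hrr')
  set ρ : ℝ := (2 : ℝ) ^ (-(q * (r' - r))) with hρ
  have hρpos : 0 < ρ := Real.rpow_pos_of_pos two_pos _
  have hρlt1 : ρ < 1 := by
    rw [hρ]
    apply Real.rpow_lt_one_of_one_lt_of_neg one_lt_two
    linarith
  have hKpos : 0 < K := by
    rw [hK]
    exact div_pos one_pos (by linarith)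
  refine ⟨hKpos, fun f _ => ?_⟩
  have hqtop : ENNReal.ofReal q ≠ ⊤ := ENNReal.ofReal_ne_top
  have hqtoReal : (ENNReal.ofReal q).toReal = q := ENNReal.toReal_ofReal hq0.le
  -- pow q of sigmaNorm
  have hpow : ∀ (s : ℝ) (g : ℕ → E), sigmaNorm N s (ENNReal.ofReal q) g ^ q
      = ∑' k : ℕ, ENNReal.ofReal ((2 : ℝ) ^ ((k : ℝ) * s) * N (g k)) ^ q := by
    intro s g
    rw [sigmaNorm, if_neg hqtop, hqtoReal, ← ENNReal.rpow_mul,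
      one_div, inv_mul_cancel₀ hq0.ne', ENNReal.rpow_one]
  have hN0 : N 0 = 0 := (hN.eq_zero_iff 0).mpr rfl
  -- rewrite each truncated norm
  have htrunc : ∀ n : ℕ, sigmaNorm N r' (ENNReal.ofReal q) (smoothS n f) ^ q
      = ∑' k : ℕ, (if k ≤ n then ENNReal.ofReal ((2 : ℝ) ^ ((k : ℝ) * r') * N (f k)) ^ q else 0) := by
    intro n
    rw [hpow]
    congr 1
    funext k
    by_cases hk : k ≤ n
    · simp [smoothS, hk]
    · simp [smoothS, hk, hN0, ENNReal.zero_rpow_of_pos hq0]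
  calc ∑' n : ℕ, ENNReal.ofReal ((2 : ℝ) ^ (-(q * (n : ℝ) * (r' - r)))) *
          sigmaNorm N r' (ENNReal.ofReal q) (smoothS n f) ^ q
      = ∑' n : ℕ, ∑' k : ℕ, (if k ≤ n then
          ENNReal.ofReal ρ ^ n * ENNReal.ofReal ((2 : ℝ) ^ ((k : ℝ) * r') * N (f k)) ^ q else 0) := by
        congr 1
        funext n
        rw [htrunc n, ← ENNReal.tsum_mul_left]
        congr 1
        funext k
        have : ENNReal.ofReal ((2 : ℝ) ^ (-(q * (n : ℝ) * (r' - r)))) = ENNReal.ofReal ρ ^ n := by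
          rw [← ENNReal.ofReal_pow hρpos.le]
          congr 1
          rw [hρ, ← Real.rpow_natCast ((2:ℝ) ^ (-(q * (r' - r)))) n, ← Real.rpow_mul two_pos.le]
          ring_nf
        rw [this, mul_ite, mul_zero]
    _ = ∑' k : ℕ, ∑' n : ℕ, (if k ≤ n then
          ENNReal.ofReal ρ ^ n * ENNReal.ofReal ((2 : ℝ) ^ ((k : ℝ) * r') * N (f k)) ^ q else 0) :=
        ENNReal.tsum_comm
    _ = ∑' k : ℕ, (ENNReal.ofReal ρ ^ k * (1 - ENNReal.ofReal ρ)⁻¹) *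
          ENNReal.ofReal ((2 : ℝ) ^ ((k : ℝ) * r') * N (f k)) ^ q := by
        congr 1
        funext k
        rw [← tail_geom (ENNReal.ofReal ρ) k, ← ENNReal.tsum_mul_right]
        congr 1
        funext n
        rw [ite_mul, zero_mul]
    _ = ENNReal.ofReal K * sigmaNorm N r (ENNReal.ofReal q) f ^ q := by
        rw [hpow, ← ENNReal.tsum_mul_left]
        congr 1
        funext k
        have hKe : (1 - ENNReal.ofReal ρ)⁻¹ = ENNReal.ofReal K := by
          rw [← ENNReal.ofReal_one, ← ENNReal.ofReal_sub _ hρpos.le,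
            ← ENNReal.ofReal_inv_of_pos (by linarith), hK, one_div]
        -- combine ρ^k with the term
        have hreal : ρ ^ k * ((2 : ℝ) ^ ((k : ℝ) * r') * N (f k)) ^ q
            = ((2 : ℝ) ^ ((k : ℝ) * r) * N (f k)) ^ q := by
          rw [Real.mul_rpow (by positivity) (hN.nonneg _),
            Real.mul_rpow (by positivity) (hN.nonneg _), ← mul_assoc]
          congr 1
          rw [hρ, ← Real.rpow_natCast ((2:ℝ) ^ (-(q * (r' - r)))) k,
            ← Real.rpow_mul two_pos.le, ← Real.rpow_mul two_pos.le,
            ← Real.rpow_mul two_pos.le, ← Real.rpow_add two_pos]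
          congr 1
          ring
        have hterm : ENNReal.ofReal ρ ^ k * ENNReal.ofReal ((2 : ℝ) ^ ((k : ℝ) * r') * N (f k)) ^ q
            = ENNReal.ofReal ((2 : ℝ) ^ ((k : ℝ) * r) * N (f k)) ^ q := by
          rw [← ENNReal.ofReal_pow hρpos.le,
            ENNReal.ofReal_rpow_of_nonneg (mul_nonneg (by positivity) (hN.nonneg _)) hq0.le,
            ← ENNReal.ofReal_mul (by positivity), hreal,
            ENNReal.ofReal_rpow_of_nonneg (mul_nonneg (by positivity) (hN.nonneg _)) hq0.le]
        rw [mul_comm (ENNReal.ofReal ρ ^ k) ((1 - ENNReal.ofReal ρ)⁻¹), hKe, mul_assoc, hterm]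
    _ ≤ ENNReal.ofReal K * sigmaNorm N r (ENNReal.ofReal q) f ^ q := le_rfl
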